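/- Let p ∈ [1,∞), let ρ : L^p(Ω, F, P) → ℝ be convex and monotone decreasing (X ≥ Y implies ρ(X) ≤ ρ(Y)) with translation invariance ρ(X + c) = ρ(X) − c for constants c. Suppose there exist K > 0 and C ∈ ℝ with ρ(X) ≤ K‖X‖_p + C for all X ∈ L^p. If Q is a probability measure absolutely continuous with respect to P whose penalty α(Q) := sup_{X ∈ L^p}(E_Q[−X] − ρ(X)) is finite, then E_Q[X] ≤ K‖X‖_p for all X ∈ L^p; consequently dQ/dP ∈ L^q with ‖dQ/dP‖_q ≤ K, where q = p/(p−1). -/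

import Mathlib

open MeasureTheory
open scoped ENNReal

/-- a convex, monotone, translation-invariant `ρ : L^p → ℝ` with
growth bound `ρ(X) ≤ K‖X‖_p + C`; if `Q ≪ P` has finite penalty then
`E_Q[X] ≤ K‖X‖_p` for all `X ∈ L^p`, and `‖dQ/dP‖_q ≤ K`. -/
theorem stmt5 {Ω : Type*} {m0 : MeasurableSpace Ω} (P : Measure Ω) [IsProbabilityMeasure P]
    (p q : ℝ≥0∞) (hp : 1 ≤ p) (hp' : p ≠ ∞) (hpq : 1 / p + 1 / q = 1)
    (ρ : (Ω → ℝ) → ℝ)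
    (hconv : ∀ (X Y : Ω → ℝ) (l : ℝ), MemLp X p P → MemLp Y p P → 0 ≤ l → l ≤ 1 →
      ρ (fun ω => l * X ω + (1 - l) * Y ω) ≤ l * ρ X + (1 - l) * ρ Y)
    (hmono : ∀ X Y : Ω → ℝ, MemLp X p P → MemLp Y p P →
      (∀ᵐ ω ∂P, Y ω ≤ X ω) → ρ X ≤ ρ Y)
    (htrans : ∀ (X : Ω → ℝ) (c : ℝ), MemLp X p P → ρ (fun ω => X ω + c) = ρ X - c)
    (K C : ℝ) (hK : 0 < K)
    (hgrowth : ∀ X : Ω → ℝ, MemLp X p P → ρ X ≤ K * (eLpNorm X p P).toReal + C)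
    (Q : Measure Ω) [IsProbabilityMeasure Q] (hQP : Q ≪ P)
    (α : ℝ) (hα : ∀ X : Ω → ℝ, MemLp X p P → (∫ ω, -X ω ∂Q) - ρ X ≤ α) :
    (∀ X : Ω → ℝ, MemLp X p P → ∫ ω, X ω ∂Q ≤ K * (eLpNorm X p P).toReal) ∧
    eLpNorm (fun ω => (Q.rnDeriv P ω).toReal) q P ≤ ENNReal.ofReal K := by
  have hp0 : p ≠ 0 := (lt_of_lt_of_le zero_lt_one hp).ne'
  -- Part 1
  have h1 : ∀ X : Ω → ℝ, MemLp X p P → ∫ ω, X ω ∂Q ≤ K * (eLpNorm X p P).toReal := by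
    intro X hX
    set Nr : ℝ := (eLpNorm X p P).toReal with hNr
    have hNr0 : 0 ≤ Nr := ENNReal.toReal_nonneg
    refine le_of_forall_pos_le_add fun ε hε => ?_
    set t : ℝ := max 1 ((C + α) / ε) with ht
    have ht1 : (1:ℝ) ≤ t := le_max_left _ _
    have htpos : (0:ℝ) < t := lt_of_lt_of_le one_pos ht1
    have hXt : MemLp (fun ω => -t * X ω) p P := hX.const_mul (-t)
    have hkey := hα _ hXt
    have hρ := hgrowth _ hXt
    have hnorm : eLpNorm (fun ω => -t * X ω) p P = ENNReal.ofReal t * eLpNorm X p P := by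
      have h : (fun ω => -t * X ω) = (-t) • X := rfl
      rw [h, eLpNorm_const_smul, enorm_neg, Real.enorm_eq_ofReal htpos.le]
    have hNtop : eLpNorm X p P ≠ ∞ := hX.2.ne
    have hnr : (eLpNorm (fun ω => -t * X ω) p P).toReal = t * Nr := by
      rw [hnorm, ENNReal.toReal_mul, ENNReal.toReal_ofReal htpos.le]
    rw [hnr] at hρ
    have hint : (∫ ω, -(-t * X ω) ∂Q) = t * ∫ ω, X ω ∂Q := by
      simp only [neg_mul, neg_neg]
      exact integral_const_mul t X
    rw [hint] at hkey
    have hCα : C + α ≤ ε * t := by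
      rcases le_or_gt (C + α) 0 with h | h
      · exact h.trans (by positivity)
      · have : (C + α) / ε ≤ t := le_max_right _ _
        calc C + α = ε * ((C + α) / ε) := by field_simp
          _ ≤ ε * t := by
            exact mul_le_mul_of_nonneg_left this hε.le
    nlinarith [htpos, hkey, hρ, hCα]
  refine ⟨h1, ?_⟩
  -- Part 2 preliminaries
  set f : Ω → ℝ≥0∞ := Q.rnDeriv P with hfdef
  have hf : Measurable f := Q.measurable_rnDeriv P
  have h2 : ∀ g : Ω → ℝ, Measurable g → (∀ ω, 0 ≤ g ω) → ∀ B : ℝ, (∀ ω, g ω ≤ B) →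
      ∫⁻ ω, ENNReal.ofReal (g ω) ∂Q ≤ ENNReal.ofReal K * eLpNorm g p P := by
    intro g hg h0 B hB
    have hmem : MemLp g p P := by
      refine MemLp.of_bound hg.aestronglyMeasurable B (ae_of_all _ fun ω => ?_)
      rw [Real.norm_eq_abs, abs_of_nonneg (h0 ω)]; exact hB ω
    have hLne : (∫⁻ ω, ENNReal.ofReal (g ω) ∂Q) ≠ ∞ := by
      refine ne_of_lt (lt_of_le_of_lt (lintegral_mono fun ω => ?_) (?_ : ∫⁻ _, ENNReal.ofReal B ∂Q < ∞))
      · exact ENNReal.ofReal_le_ofReal (hB ω)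
      · simp [lintegral_const]
    have hint : ∫ ω, g ω ∂Q = (∫⁻ ω, ENNReal.ofReal (g ω) ∂Q).toReal := by
      rw [integral_eq_lintegral_of_nonneg_ae (ae_of_all _ h0) hg.aestronglyMeasurable]
    have hh := h1 g hmem
    rw [hint] at hh
    calc ∫⁻ ω, ENNReal.ofReal (g ω) ∂Q
        = ENNReal.ofReal ((∫⁻ ω, ENNReal.ofReal (g ω) ∂Q).toReal) := by
          rw [ENNReal.ofReal_toReal hLne]
      _ ≤ ENNReal.ofReal (K * (eLpNorm g p P).toReal) := ENNReal.ofReal_le_ofReal hh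
      _ = ENNReal.ofReal K * ENNReal.ofReal ((eLpNorm g p P).toReal) := by
          rw [ENNReal.ofReal_mul hK.le]
      _ = ENNReal.ofReal K * eLpNorm g p P := by rw [ENNReal.ofReal_toReal hmem.2.ne]
  by_cases hq : q = ∞
  · -- case q = ∞, p = 1
    subst hq
    have hp1 : p = 1 := by
      have : 1 / p = 1 := by simpa using hpq
      rwa [one_div, ENNReal.inv_eq_one] at this
    subst hp1
    have hle : ∀ s : Set Ω, MeasurableSet s → Q s ≤ ENNReal.ofReal K * P s := by
      intro s hs
      have hcalc := h2 (s.indicator fun _ => (1:ℝ)) (measurable_const.indicator hs)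
        (fun ω => Set.indicator_nonneg (fun _ _ => zero_le_one) ω) 1
        (fun ω => Set.indicator_le_self' (fun _ _ => zero_le_one) ω)
      have heq : (fun ω => ENNReal.ofReal ((s.indicator fun _ => (1:ℝ)) ω))
          = s.indicator fun _ => (1:ℝ≥0∞) := by
        funext ω; by_cases hω : ω ∈ s <;> simp [Set.indicator, hω]
      rw [heq] at hcalc
      have hnorm : eLpNorm (s.indicator fun _ => (1:ℝ)) 1 P = P s := by
        rw [eLpNorm_indicator_const hs one_ne_zero ENNReal.one_ne_top]
        simp
      rw [hnorm] at hcalc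
      calc Q s = ∫⁻ ω, s.indicator (fun _ => (1:ℝ≥0∞)) ω ∂Q :=
            (lintegral_indicator_one hs).symm
        _ ≤ ENNReal.ofReal K * P s := hcalc
    have hae : f ≤ᵐ[P] fun _ => ENNReal.ofReal K := by
      refine ae_le_of_forall_setLIntegral_le_of_sigmaFinite hf fun s hs _ => ?_
      rw [Measure.setLIntegral_rnDeriv hQP, setLIntegral_const]
      exact hle s hs
    have hbd : ∀ᵐ ω ∂P, ‖(f ω).toReal‖ ≤ K := by
      filter_upwards [hae] with ω hω
      rw [Real.norm_eq_abs, abs_of_nonneg ENNReal.toReal_nonneg]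
      exact ENNReal.toReal_le_of_le_ofReal hK.le hω
    have := eLpNorm_le_of_ae_bound (p := ∞) (μ := P) hbd
    simpa using this
  · -- case q finite
    have hq0 : q ≠ 0 := by
      intro h; rw [h] at hpq; simp at hpq
    set pr : ℝ := p.toReal with hprdef
    set qr : ℝ := q.toReal with hqrdef
    have hpr_pos : 0 < pr := ENNReal.toReal_pos hp0 hp'
    have hqr_pos : 0 < qr := ENNReal.toReal_pos hq0 hq
    have hpq' : 1 / pr + 1 / qr = 1 := by
      have h := congrArg ENNReal.toReal hpq
      rw [ENNReal.toReal_add (by simp [hp0]) (by simp [hq0]), ENNReal.toReal_div,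
        ENNReal.toReal_div] at h
      simpa using h
    have hpr1 : 1 < pr := by
      have h1q : 0 < 1 / qr := by positivity
      have : 1 / pr < 1 := by linarith
      rw [div_lt_one hpr_pos] at this
      exact this
    have hqr1 : 1 < qr := by
      have h1p : 0 < 1 / pr := by positivity
      have : 1 / qr < 1 := by linarith
      rw [div_lt_one hqr_pos] at this
      exact this
    have hsum : qr + pr = pr * qr := by
      field_simp at hpq'
      linarith
    have hpq2 : (qr - 1) * pr = qr := by nlinarith
    set r : Ω → ℝ := fun ω => (f ω).toReal with hrdef
    have hr : Measurable r := hf.ennreal_toReal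
    have hr0 : ∀ ω, 0 ≤ r ω := fun _ => ENNReal.toReal_nonneg
    set I : ℕ → ℝ≥0∞ := fun n => ∫⁻ ω, ENNReal.ofReal (min (r ω) n ^ qr) ∂P with hIdef
    have hmin0 : ∀ (n : ℕ) (ω : Ω), 0 ≤ min (r ω) n := fun n ω =>
      le_min (hr0 ω) (Nat.cast_nonneg n)
    have hmul : ∀ x : ℝ, 0 ≤ x → x * x ^ (qr - 1) = x ^ qr := by
      intro x hx
      rw [← Real.rpow_one_add' hx (by linarith : 1 + (qr - 1) ≠ 0)]
      ring_nf
    have hImeas : ∀ n : ℕ, Measurable fun ω => ENNReal.ofReal (min (r ω) n ^ qr) := by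
      intro n
      exact ((Real.continuous_rpow_const hqr_pos.le).measurable.comp
        (hr.min measurable_const)).ennreal_ofReal
    have hkeyn : ∀ n : ℕ, I n ^ (1 / qr) ≤ ENNReal.ofReal K := by
      intro n
      set g : Ω → ℝ := fun ω => min (r ω) n ^ (qr - 1) with hgdef
      have hgmeas : Measurable g :=
        (Real.continuous_rpow_const (by linarith)).measurable.comp (hr.min measurable_const)
      have hg0 : ∀ ω, 0 ≤ g ω := fun ω => Real.rpow_nonneg (hmin0 n ω) _
      have hgB : ∀ ω, g ω ≤ (n:ℝ) ^ (qr - 1) := fun ω =>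
        Real.rpow_le_rpow (hmin0 n ω) (min_le_right _ _) (by linarith)
      have hIn_top : I n ≠ ∞ := by
        refine ne_of_lt (lt_of_le_of_lt (lintegral_mono fun ω => ENNReal.ofReal_le_ofReal
          (Real.rpow_le_rpow (hmin0 n ω) (min_le_right _ _) hqr_pos.le))
          (?_ : ∫⁻ _, ENNReal.ofReal ((n:ℝ) ^ qr) ∂P < ∞))
        simp [lintegral_const]
      -- I n ≤ ∫⁻ ofReal (g) dQ
      have hIle : I n ≤ ∫⁻ ω, ENNReal.ofReal (g ω) ∂Q := by
        rw [← lintegral_rnDeriv_mul hQP hgmeas.ennreal_ofReal.aemeasurable]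
        refine lintegral_mono fun ω => ?_
        calc ENNReal.ofReal (min (r ω) n ^ qr)
            = ENNReal.ofReal (min (r ω) n * g ω) := by rw [hmul _ (hmin0 n ω)]
          _ = ENNReal.ofReal (min (r ω) n) * ENNReal.ofReal (g ω) := by
              rw [ENNReal.ofReal_mul (hmin0 n ω)]
          _ ≤ f ω * ENNReal.ofReal (g ω) := by
              refine mul_le_mul_left ?_ _
              refine le_trans (ENNReal.ofReal_le_ofReal (min_le_left _ _)) ?_
              exact ENNReal.ofReal_toReal_le
      -- eLpNorm g p P = I n ^ (1/pr)
      have hnormg : eLpNorm g p P = I n ^ (1 / pr) := by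
        rw [eLpNorm_eq_lintegral_rpow_enorm_toReal hp0 hp']
        congr 1
        refine lintegral_congr fun ω => ?_
        rw [Real.enorm_eq_ofReal (hg0 ω),
          ENNReal.ofReal_rpow_of_nonneg (hg0 ω) hpr_pos.le]
        congr 1
        show ((min (r ω) n) ^ (qr - 1)) ^ pr = (min (r ω) n) ^ qr
        rw [← Real.rpow_mul (hmin0 n ω), hpq2]
      have hfinal := (h2 g hgmeas hg0 _ hgB)
      rw [hnormg] at hfinal
      have hIK : I n ≤ ENNReal.ofReal K * I n ^ (1 / pr) := le_trans hIle hfinal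
      by_cases hI0 : I n = 0
      · rw [hI0, ENNReal.zero_rpow_of_pos (by positivity)]
        exact zero_le
      · have hp_ne0 : I n ^ (1 / pr) ≠ 0 := (ENNReal.rpow_pos (pos_iff_ne_zero.2 hI0) hIn_top).ne'
        have hp_netop : I n ^ (1 / pr) ≠ ∞ :=
          ENNReal.rpow_ne_top_of_nonneg (by positivity) hIn_top
        have h6 : I n ^ (1 / pr) * I n ^ (1 / qr) ≤ I n ^ (1 / pr) * ENNReal.ofReal K := by
          calc I n ^ (1 / pr) * I n ^ (1 / qr) = I n := by
                rw [← ENNReal.rpow_add _ _ hI0 hIn_top, hpq', ENNReal.rpow_one]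
            _ ≤ ENNReal.ofReal K * I n ^ (1 / pr) := hIK
            _ = I n ^ (1 / pr) * ENNReal.ofReal K := mul_comm _ _
        exact (ENNReal.mul_le_mul_iff_right hp_ne0 hp_netop).mp h6
    -- each I n ≤ (ofReal K)^qr
    have hInK : ∀ n : ℕ, I n ≤ ENNReal.ofReal K ^ qr := by
      intro n
      have := ENNReal.rpow_le_rpow (hkeyn n) hqr_pos.le
      rwa [← ENNReal.rpow_mul, one_div, inv_mul_cancel₀ hqr_pos.ne', ENNReal.rpow_one] at this
    -- monotone convergence
    have hMCT : ∫⁻ ω, ENNReal.ofReal (r ω ^ qr) ∂P = ⨆ n, I n := by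
      rw [← lintegral_iSup hImeas]
      · refine lintegral_congr fun ω => ?_
        refine le_antisymm ?_ ?_
        · obtain ⟨n, hn⟩ := exists_nat_ge (r ω)
          refine le_iSup_of_le n (le_of_eq ?_)
          rw [min_eq_left hn]
        · exact iSup_le fun n => ENNReal.ofReal_le_ofReal
            (Real.rpow_le_rpow (hmin0 n ω) (min_le_left _ _) hqr_pos.le)
      · intro i j hij ω
        exact ENNReal.ofReal_le_ofReal (Real.rpow_le_rpow (hmin0 i ω)
          (min_le_min le_rfl (Nat.cast_le.2 hij)) hqr_pos.le)
    have hIsup : ∫⁻ ω, ENNReal.ofReal (r ω ^ qr) ∂P ≤ ENNReal.ofReal K ^ qr := by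
      rw [hMCT]; exact iSup_le hInK
    -- conclude
    rw [eLpNorm_eq_lintegral_rpow_enorm_toReal hq0 hq]
    have heq : ∀ ω, ‖(Q.rnDeriv P ω).toReal‖ₑ ^ qr = ENNReal.ofReal (r ω ^ qr) := by
      intro ω
      rw [Real.enorm_eq_ofReal (hr0 ω), ENNReal.ofReal_rpow_of_nonneg (hr0 ω) hqr_pos.le]
    calc (∫⁻ ω, ‖(Q.rnDeriv P ω).toReal‖ₑ ^ q.toReal ∂P) ^ (1 / q.toReal)
        = (∫⁻ ω, ENNReal.ofReal (r ω ^ qr) ∂P) ^ (1 / qr) := by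
          congr 1; exact lintegral_congr fun ω => heq ω
      _ ≤ (ENNReal.ofReal K ^ qr) ^ (1 / qr) := ENNReal.rpow_le_rpow hIsup (by positivity)
      _ = ENNReal.ofReal K := by
          rw [← ENNReal.rpow_mul, mul_one_div, div_self hqr_pos.ne', ENNReal.rpow_one]
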